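/- (Finite-sample core of the consistency theorem for the multi-head critic bonus.) The variance of the bootstrap deviation D = φᵀ Λ⁻¹ ( (1/ζ) Σ_{i∈S} φ_i ε_i − Σ_{i=1}^n φ_i ε_i ) equals ((1 − ζ)/ζ) · σ² · (φᵀ Λ⁻¹ φ − λ · φᵀ Λ⁻² φ); in particular, the standard deviation of D equals √((1 − ζ)/ζ) · σ · √(φᵀ Λ⁻¹ φ − λ · φᵀ Λ⁻² φ), matching the elliptical (count-based) bonus √(φᵀ Λ⁻¹ φ) up to the correction term λ · φᵀ Λ⁻² φ and the constant factor √((1 − ζ)/ζ) · σ. -/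

import Mathlib

open Matrix MeasureTheory ProbabilityTheory
open scoped ENNReal

/-- Discrete measurable-space structure on finite sets of indices, used to speak of the
random subset `S` as a measurable map. -/
instance instMeasurableSpaceFinsetFin (n : ℕ) : MeasurableSpace (Finset (Fin n)) := ⊤

instance (n : ℕ) : MeasurableSingletonClass (Finset (Fin n)) := ⟨fun _ => trivial⟩

section Helpers

lemma BBhelper.vecMulVec_mulVec' {d : ℕ} (a b x : Fin d → ℝ) :
    vecMulVec a b *ᵥ x = (b ⬝ᵥ x) • a := by
  ext i
  simp [mulVec, vecMulVec_apply, dotProduct, Finset.mul_sum, Pi.smul_apply, smul_eq_mul,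
    mul_comm, mul_assoc, mul_left_comm]

lemma BBhelper.sum_mulVec' {d n : ℕ} (A : Fin n → Matrix (Fin d) (Fin d) ℝ) (x : Fin d → ℝ) :
    (∑ i, A i) *ᵥ x = ∑ i, A i *ᵥ x := by
  ext j
  simp only [mulVec, dotProduct, Finset.sum_apply, Finset.sum_mul, Matrix.sum_apply]
  rw [Finset.sum_comm]

lemma BBhelper.dotProduct_sum' {d n : ℕ} (u : Fin d → ℝ) (v : Fin n → Fin d → ℝ) :
    u ⬝ᵥ (∑ i, v i) = ∑ i, u ⬝ᵥ v i := by
  simp only [dotProduct, Finset.sum_apply, Finset.mul_sum]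
  rw [Finset.sum_comm]

lemma BBhelper.lam_posdef {d n : ℕ} (φi : Fin n → Fin d → ℝ) (lam : ℝ) (hlam : 0 < lam) :
    (lam • (1 : Matrix (Fin d) (Fin d) ℝ) + ∑ i, vecMulVec (φi i) (φi i)).PosDef := by
  apply Matrix.PosDef.add_posSemidef
  · rw [Matrix.smul_one_eq_diagonal]
    exact Matrix.posDef_diagonal_iff.2 fun _ => hlam
  · refine Matrix.posSemidef_iff_dotProduct_mulVec.mpr ⟨?_, ?_⟩
    · unfold Matrix.IsHermitian
      rw [conjTranspose_sum]
      refine Finset.sum_congr rfl fun i _ => ?_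
      ext a b
      simp [conjTranspose_apply, vecMulVec_apply, mul_comm]
    · intro x
      rw [BBhelper.sum_mulVec', BBhelper.dotProduct_sum']
      refine Finset.sum_nonneg fun i _ => ?_
      rw [BBhelper.vecMulVec_mulVec']
      simp only [dotProduct_smul, smul_eq_mul, star_trivial]
      rw [show (φi i ⬝ᵥ x) = x ⬝ᵥ φi i from dotProduct_comm _ _]
      exact mul_self_nonneg _

lemma BBhelper.key_alg {d n : ℕ} (φi : Fin n → Fin d → ℝ) (φ : Fin d → ℝ) (lam : ℝ)
    (hlam : 0 < lam) (Λ : Matrix (Fin d) (Fin d) ℝ)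
    (hΛ : Λ = lam • (1 : Matrix (Fin d) (Fin d) ℝ) + ∑ i, vecMulVec (φi i) (φi i)) :
    ∑ i, (φ ⬝ᵥ (Λ⁻¹ *ᵥ φi i)) ^ 2
      = φ ⬝ᵥ (Λ⁻¹ *ᵥ φ) - lam * (φ ⬝ᵥ ((Λ⁻¹ * Λ⁻¹) *ᵥ φ)) := by
  have hpd : Λ.PosDef := hΛ ▸ BBhelper.lam_posdef φi lam hlam
  have hunit : IsUnit Λ.det := (Matrix.isUnit_iff_isUnit_det _).1 hpd.isUnit
  have h1 : Λᵀ = Λ := by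
    have := hpd.isHermitian.eq
    rwa [Matrix.conjTranspose_eq_transpose_of_trivial] at this
  have hsymm : Λ⁻¹ᵀ = Λ⁻¹ := by rw [Matrix.transpose_nonsing_inv, h1]
  set ψ := Λ⁻¹ *ᵥ φ with hψ
  have hai : ∀ i, φ ⬝ᵥ (Λ⁻¹ *ᵥ φi i) = ψ ⬝ᵥ φi i := by
    intro i
    rw [Matrix.dotProduct_mulVec, ← Matrix.mulVec_transpose, hsymm]
  have hΛψ : Λ *ᵥ ψ = φ := by
    rw [hψ, Matrix.mulVec_mulVec, Matrix.mul_nonsing_inv _ hunit, Matrix.one_mulVec]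
  have key : ∑ i, (ψ ⬝ᵥ φi i) ^ 2 = ψ ⬝ᵥ φ - lam * (ψ ⬝ᵥ ψ) := by
    have h2 : ψ ⬝ᵥ ((∑ i, vecMulVec (φi i) (φi i)) *ᵥ ψ) = ∑ i, (ψ ⬝ᵥ φi i) ^ 2 := by
      rw [BBhelper.sum_mulVec', BBhelper.dotProduct_sum']
      refine Finset.sum_congr rfl fun i _ => ?_
      rw [BBhelper.vecMulVec_mulVec', dotProduct_smul, smul_eq_mul,
        show (φi i ⬝ᵥ ψ) = ψ ⬝ᵥ φi i from dotProduct_comm _ _, sq]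
    have h3 : (∑ i, vecMulVec (φi i) (φi i)) = Λ - lam • 1 := by
      rw [hΛ, add_sub_cancel_left]
    rw [← h2, h3, Matrix.sub_mulVec, dotProduct_sub, hΛψ, Matrix.smul_mulVec,
      Matrix.one_mulVec, dotProduct_smul, smul_eq_mul]
  calc ∑ i, (φ ⬝ᵥ (Λ⁻¹ *ᵥ φi i)) ^ 2 = ∑ i, (ψ ⬝ᵥ φi i) ^ 2 := by
        refine Finset.sum_congr rfl fun i _ => by rw [hai]
    _ = ψ ⬝ᵥ φ - lam * (ψ ⬝ᵥ ψ) := key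
    _ = φ ⬝ᵥ (Λ⁻¹ *ᵥ φ) - lam * (φ ⬝ᵥ ((Λ⁻¹ * Λ⁻¹) *ᵥ φ)) := by
        rw [show ψ ⬝ᵥ φ = φ ⬝ᵥ ψ from dotProduct_comm _ _]
        congr 2
        rw [← Matrix.mulVec_mulVec, hψ]
        rw [Matrix.dotProduct_mulVec φ, ← Matrix.mulVec_transpose, hsymm]

lemma BBhelper.count_contains {n m : ℕ} (hm : 1 ≤ m) (i : Fin n) :
    ((Finset.univ : Finset (Finset (Fin n))).filter (fun s => s.card = m ∧ i ∈ s)).card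
      = Nat.choose (n - 1) (m - 1) := by
  have h := Finset.card_nbij' (s := (Finset.univ : Finset (Finset (Fin n))).filter
        (fun s => s.card = m ∧ i ∈ s))
      (t := (Finset.univ.erase i).powersetCard (m - 1))
      (fun s => s.erase i) (fun t => insert i t)
      (by
        intro s hs
        simp only [Finset.mem_coe, Finset.mem_filter, Finset.mem_univ, true_and] at hs
        rw [Finset.mem_coe, Finset.mem_powersetCard]
        constructor
        · intro x hx
          simp only [Finset.mem_erase] at hx ⊢
          exact ⟨hx.1, Finset.mem_univ x⟩
        · rw [Finset.card_erase_of_mem hs.2, hs.1])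
      (by
        intro t ht
        rw [Finset.mem_coe, Finset.mem_powersetCard] at ht
        have hit : i ∉ t := fun h => by
          have := ht.1 h; simp at this
        simp only [Finset.mem_coe, Finset.mem_filter, Finset.mem_univ, true_and]
        refine ⟨?_, Finset.mem_insert_self i t⟩
        rw [Finset.card_insert_of_notMem hit, ht.2]
        omega)
      (by
        intro s hs
        simp only [Finset.mem_coe, Finset.mem_filter, Finset.mem_univ, true_and] at hs
        exact Finset.insert_erase hs.2)
      (by
        intro t ht
        rw [Finset.mem_coe, Finset.mem_powersetCard] at ht
        have hit : i ∉ t := fun h => by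
          have := ht.1 h; simp at this
        exact Finset.erase_insert hit)
  rw [h, Finset.card_powersetCard, Finset.card_erase_of_mem (Finset.mem_univ i),
    Finset.card_univ, Fintype.card_fin]

lemma BBhelper.count_all {n m : ℕ} :
    ((Finset.univ : Finset (Finset (Fin n))).filter (fun s => s.card = m)).card
      = Nat.choose n m := by
  have : (Finset.univ : Finset (Finset (Fin n))).filter (fun s => s.card = m)
      = Finset.powersetCard m Finset.univ := by
    rw [Finset.powersetCard_eq_filter, Finset.powerset_univ]
  rw [this, Finset.card_powersetCard, Finset.card_univ, Fintype.card_fin]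

lemma BBhelper.ratio_eq {n m : ℕ} (hm : 1 ≤ m) (hmn : m ≤ n) :
    (Nat.choose (n - 1) (m - 1) : ℝ) * n = (Nat.choose n m : ℝ) * m := by
  have h := Nat.add_one_mul_choose_eq (n - 1) (m - 1)
  have h1 : n - 1 + 1 = n := by omega
  have h2 : m - 1 + 1 = m := by omega
  rw [h1, h2] at h
  exact_mod_cast congrArg (Nat.cast : ℕ → ℝ) (by rw [Nat.mul_comm] at h; exact h)

end Helpers

/-- Finite-sample core of the consistency theorem for the multi-head critic
bonus: the variance of the bootstrap deviation
`D = φᵀ Λ⁻¹ ((1/ζ) Σ_{i∈S} φ_i ε_i − Σ_{i=1}^n φ_i ε_i)` equals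
`((1 − ζ)/ζ)·σ²·(φᵀ Λ⁻¹ φ − λ·φᵀ Λ⁻² φ)`; in particular, the standard deviation of `D`
equals `√((1 − ζ)/ζ)·σ·√(φᵀ Λ⁻¹ φ − λ·φᵀ Λ⁻² φ)`, matching the elliptical (count-based)
bonus `√(φᵀ Λ⁻¹ φ)` up to the correction term `λ·φᵀ Λ⁻² φ` and the constant factor
`√((1 − ζ)/ζ)·σ`. -/
theorem bootstrap_bonus_consistency_core
    {d n : ℕ} (hn : 1 ≤ n)
    (φi : Fin n → Fin d → ℝ) (φ : Fin d → ℝ) (lam : ℝ) (hlam : 0 < lam)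
    (Λ : Matrix (Fin d) (Fin d) ℝ)
    (hΛ : Λ = lam • (1 : Matrix (Fin d) (Fin d) ℝ) + ∑ i, vecMulVec (φi i) (φi i))
    {Ω : Type*} [MeasurableSpace Ω] (μ : Measure Ω) [IsProbabilityMeasure μ]
    (ε : Fin n → Ω → ℝ) (hε_meas : ∀ i, Measurable (ε i))
    (hε_indep : iIndepFun ε μ)
    (hε_L2 : ∀ i, MemLp (ε i) 2 μ)
    (σ : ℝ) (hσ : 0 ≤ σ)
    (hε_mean : ∀ i, ∫ ω, ε i ω ∂μ = 0)
    (hε_var : ∀ i, ∫ ω, (ε i ω) ^ 2 ∂μ = σ ^ 2)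
    (m : ℕ) (hm : 1 ≤ m) (hmn : m ≤ n)
    (ζ : ℝ) (hζ : ζ = (m : ℝ) / n)
    (S : Ω → Finset (Fin n)) (hS_meas : Measurable S)
    (hS_law : ∀ s : Finset (Fin n),
      μ (S ⁻¹' {s}) = if s.card = m then ((n.choose m : ℝ≥0∞))⁻¹ else 0)
    (hS_indep : IndepFun S (fun ω i => ε i ω) μ)
    (D : Ω → ℝ)
    (hD : ∀ ω, D ω = φ ⬝ᵥ (Λ⁻¹ *ᵥ
      ((1 / ζ) • (∑ i ∈ S ω, ε i ω • φi i) - ∑ i, ε i ω • φi i))) :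
    (∫ ω, (D ω) ^ 2 ∂μ
        = ((1 - ζ) / ζ) * σ ^ 2 *
          (φ ⬝ᵥ (Λ⁻¹ *ᵥ φ) - lam * (φ ⬝ᵥ ((Λ⁻¹ * Λ⁻¹) *ᵥ φ)))) ∧
    (Real.sqrt (∫ ω, (D ω) ^ 2 ∂μ)
        = Real.sqrt ((1 - ζ) / ζ) * σ *
          Real.sqrt (φ ⬝ᵥ (Λ⁻¹ *ᵥ φ) - lam * (φ ⬝ᵥ ((Λ⁻¹ * Λ⁻¹) *ᵥ φ)))) := by
  -- basic positivity facts
  have hn0 : (0:ℝ) < n := by exact_mod_cast hn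
  have hm0 : (0:ℝ) < m := by exact_mod_cast hm
  have hζ0 : 0 < ζ := by rw [hζ]; positivity
  have hζ1 : ζ ≤ 1 := by
    rw [hζ, div_le_one hn0]; exact_mod_cast hmn
  -- notation
  set a : Fin n → ℝ := fun i => φ ⬝ᵥ (Λ⁻¹ *ᵥ φi i) with ha
  set f : Fin n → Finset (Fin n) → ℝ :=
    fun i s => (1/ζ) * (if i ∈ s then (1:ℝ) else 0) - 1 with hf
  set T : Fin n → Ω → ℝ := fun i ω => a i * (f i (S ω) * ε i ω) with hT
  -- Step 1: rewrite D as a sum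
  have hD' : ∀ ω, D ω = ∑ i, T i ω := by
    intro ω
    rw [hD ω]
    have hv : (1 / ζ) • (∑ i ∈ S ω, ε i ω • φi i) - ∑ i, ε i ω • φi i
        = ∑ i, (f i (S ω) * ε i ω) • φi i := by
      funext j
      simp only [Pi.sub_apply, Pi.smul_apply, Finset.sum_apply, smul_eq_mul]
      rw [show ∑ i ∈ S ω, ε i ω * φi i j = ∑ i, (if i ∈ S ω then ε i ω * φi i j else 0) by
        rw [Finset.sum_ite_mem, Finset.univ_inter]]
      rw [Finset.mul_sum, ← Finset.sum_sub_distrib]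
      refine Finset.sum_congr rfl fun i _ => ?_
      by_cases hi : i ∈ S ω <;> simp [hf, hi] <;> ring
    rw [hv]
    rw [← Matrix.mulVecLin_apply, map_sum]
    rw [BBhelper.dotProduct_sum']
    refine Finset.sum_congr rfl fun i _ => ?_
    rw [_root_.map_smul, Matrix.mulVecLin_apply, dotProduct_smul, smul_eq_mul, hT, ha]
    ring
  -- Step 2: the law of S as a real pmf and expectations of functions of S
  have hC0 : (0:ℝ) < (n.choose m : ℝ) := by exact_mod_cast Nat.choose_pos hmn
  have hp : ∀ s : Finset (Fin n), (μ (S ⁻¹' {s})).toReal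
      = if s.card = m then ((n.choose m : ℝ))⁻¹ else 0 := by
    intro s
    rw [hS_law s]
    split_ifs
    · rw [ENNReal.toReal_inv]
      norm_num
    · simp
  have hES : ∀ h : Finset (Fin n) → ℝ, ∫ ω, h (S ω) ∂μ
      = ∑ s, (μ (S ⁻¹' {s})).toReal * h s := by
    intro h
    have hmh : Measurable h := measurable_of_finite h
    haveI : IsProbabilityMeasure (μ.map S) := Measure.isProbabilityMeasure_map hS_meas.aemeasurable
    rw [← integral_map hS_meas.aemeasurable hmh.aestronglyMeasurable]
    rw [integral_fintype (Integrable.of_finite)]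
    refine Finset.sum_congr rfl fun s _ => ?_
    rw [measureReal_def, Measure.map_apply hS_meas (measurableSet_singleton s), smul_eq_mul]
  -- Step 3: E[(f i (S))^2] = (1-ζ)/ζ
  have hEfi : ∀ i : Fin n, ∫ ω, (f i (S ω))^2 ∂μ = (1 - ζ)/ζ := by
    intro i
    rw [hES (fun s => (f i s)^2)]
    have hterm : ∀ s : Finset (Fin n), (μ (S ⁻¹' {s})).toReal * (f i s)^2
        = if s.card = m then ((n.choose m : ℝ))⁻¹ * (f i s)^2 else 0 := by
      intro s; rw [hp s]; split_ifs <;> simp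
    rw [Finset.sum_congr rfl fun s _ => hterm s, ← Finset.sum_filter]
    rw [← Finset.sum_filter_add_sum_filter_not
      (Finset.univ.filter (fun s : Finset (Fin n) => s.card = m)) (fun s => i ∈ s)]
    have e1 : (Finset.univ.filter (fun s : Finset (Fin n) => s.card = m)).filter
        (fun s => i ∈ s)
        = Finset.univ.filter (fun s : Finset (Fin n) => s.card = m ∧ i ∈ s) := by
      rw [Finset.filter_filter]
    have hval1 : ∀ s ∈ (Finset.univ.filter (fun s : Finset (Fin n) => s.card = m)).filter
        (fun s => i ∈ s), ((n.choose m : ℝ))⁻¹ * (f i s)^2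
          = ((n.choose m : ℝ))⁻¹ * (1/ζ - 1)^2 := by
      intro s hs
      simp only [Finset.mem_filter] at hs
      simp [hf, hs.2]
    have hval2 : ∀ s ∈ (Finset.univ.filter (fun s : Finset (Fin n) => s.card = m)).filter
        (fun s => ¬ i ∈ s), ((n.choose m : ℝ))⁻¹ * (f i s)^2
          = ((n.choose m : ℝ))⁻¹ := by
      intro s hs
      simp only [Finset.mem_filter] at hs
      simp [hf, hs.2]
    rw [Finset.sum_congr rfl hval1, Finset.sum_congr rfl hval2,
      Finset.sum_const, Finset.sum_const]
    have hcard1 : ((Finset.univ.filter (fun s : Finset (Fin n) => s.card = m)).filter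
        (fun s => i ∈ s)).card = Nat.choose (n-1) (m-1) := by
      rw [e1]; exact BBhelper.count_contains hm i
    have hcard2 : ((Finset.univ.filter (fun s : Finset (Fin n) => s.card = m)).filter
        (fun s => ¬ i ∈ s)).card = Nat.choose n m - Nat.choose (n-1) (m-1) := by
      have := Finset.card_filter_add_card_filter_not
        (s := Finset.univ.filter (fun s : Finset (Fin n) => s.card = m))
        (p := fun s => i ∈ s)
      rw [BBhelper.count_all] at this
      omega
    rw [hcard1, hcard2, nsmul_eq_mul, nsmul_eq_mul]
    -- arithmetic
    have hAle : Nat.choose (n-1) (m-1) ≤ Nat.choose n m := by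
      have h := BBhelper.ratio_eq hm hmn
      by_contra hcon
      push_neg at hcon
      have : (Nat.choose n m : ℝ) < (Nat.choose (n-1) (m-1) : ℝ) := by exact_mod_cast hcon
      nlinarith [hm0, hn0, (by exact_mod_cast hmn : (m:ℝ) ≤ n)]
    have hcast : ((Nat.choose n m - Nat.choose (n-1) (m-1) : ℕ) : ℝ)
        = (Nat.choose n m : ℝ) - (Nat.choose (n-1) (m-1) : ℝ) := by
      rw [Nat.cast_sub hAle]
    rw [hcast]
    have hA : ((Nat.choose (n-1) (m-1) : ℕ) : ℝ) = (n.choose m : ℝ) * m / n := by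
      rw [eq_div_iff hn0.ne']
      exact BBhelper.ratio_eq hm hmn
    rw [hA, hζ]
    field_simp
    ring
  -- Step 4: integrability and product formula for T i * T j
  have hfb : ∀ (i : Fin n) (s : Finset (Fin n)), ‖f i s‖ ≤ |1/ζ| + 1 := by
    intro i s
    have : f i s = 1/ζ - 1 ∨ f i s = -1 := by
      by_cases hi : i ∈ s <;> simp [hf, hi]
    rcases this with h | h <;> rw [h, Real.norm_eq_abs]
    · calc |1/ζ - 1| ≤ |1/ζ| + |1| := abs_sub _ _
        _ = |1/ζ| + 1 := by rw [abs_one]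
    · rw [abs_neg, abs_one]
      have : (0:ℝ) ≤ |1/ζ| := abs_nonneg _
      linarith
  have hXmeas : ∀ i j : Fin n, Measurable (fun ω => f i (S ω) * f j (S ω)) :=
    fun i j => ((measurable_of_finite (f i)).comp hS_meas).mul
      ((measurable_of_finite (f j)).comp hS_meas)
  have hYint : ∀ i j : Fin n, Integrable (fun ω => ε i ω * ε j ω) μ := by
    intro i j
    rcases eq_or_ne i j with rfl | hij
    · have := (hε_L2 i).integrable_sq
      exact this.congr (Filter.Eventually.of_forall fun ω => by simp [sq])
    · exact IndepFun.integrable_mul (hε_indep.indepFun hij)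
        ((hε_L2 i).integrable (by norm_num)) ((hε_L2 j).integrable (by norm_num))
  have hXYint : ∀ i j : Fin n,
      Integrable (fun ω => (f i (S ω) * f j (S ω)) * (ε i ω * ε j ω)) μ := by
    intro i j
    refine Integrable.bdd_mul (hYint i j) (hXmeas i j).aestronglyMeasurable
      (c := (|1/ζ| + 1)^2) (Filter.Eventually.of_forall fun ω => ?_)
    rw [norm_mul, sq]
    have h1 := hfb i (S ω)
    have h2 := hfb j (S ω)
    have h3 : (0:ℝ) ≤ |1/ζ| + 1 := by positivity
    exact mul_le_mul h1 h2 (norm_nonneg _) h3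
  have hTeq : ∀ i j : Fin n, (fun ω => T i ω * T j ω)
      = fun ω => (a i * a j) * ((f i (S ω) * f j (S ω)) * (ε i ω * ε j ω)) := by
    intro i j
    funext ω
    simp only [hT]
    ring
  have hTint : ∀ i j : Fin n, Integrable (fun ω => T i ω * T j ω) μ := by
    intro i j
    rw [hTeq i j]
    exact (hXYint i j).const_mul _
  -- Step 5: the independence factorization
  have hXYindep : ∀ i j : Fin n, IndepFun (fun ω => f i (S ω) * f j (S ω))
      (fun ω => ε i ω * ε j ω) μ := by
    intro i j
    have hg : Measurable (fun s : Finset (Fin n) => f i s * f j s) := measurable_of_finite _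
    have hh : Measurable (fun v : Fin n → ℝ => v i * v j) :=
      (measurable_pi_apply i).mul (measurable_pi_apply j)
    exact hS_indep.comp hg hh
  have hEprod : ∀ i j : Fin n, ∫ ω, T i ω * T j ω ∂μ
      = (a i * a j) * ((∫ ω, f i (S ω) * f j (S ω) ∂μ) * (∫ ω, ε i ω * ε j ω ∂μ)) := by
    intro i j
    rw [hTeq i j, MeasureTheory.integral_const_mul]
    congr 1
    exact (hXYindep i j).integral_fun_mul_eq_mul_integral
      ((hXmeas i j).aestronglyMeasurable)
      (((hε_meas i).mul (hε_meas j)).aestronglyMeasurable)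
  -- Step 6: values of the factors
  have hEe : ∀ i j : Fin n, i ≠ j → ∫ ω, ε i ω * ε j ω ∂μ = 0 := by
    intro i j hij
    rw [(hε_indep.indepFun hij).integral_fun_mul_eq_mul_integral
      (hε_meas i).aestronglyMeasurable (hε_meas j).aestronglyMeasurable,
      hε_mean i, hε_mean j, mul_zero]
  have hEe2 : ∀ i : Fin n, ∫ ω, ε i ω * ε i ω ∂μ = σ^2 := by
    intro i
    rw [show (fun ω => ε i ω * ε i ω) = fun ω => (ε i ω)^2 from funext fun ω => (sq _).symm]
    exact hε_var i
  have hEf2 : ∀ i : Fin n, ∫ ω, f i (S ω) * f i (S ω) ∂μ = (1 - ζ)/ζ := by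
    intro i
    rw [show (fun ω => f i (S ω) * f i (S ω)) = fun ω => (f i (S ω))^2
      from funext fun ω => (sq _).symm]
    exact hEfi i
  -- Step 7: assemble the variance
  have hvar : ∫ ω, (D ω) ^ 2 ∂μ
      = ((1 - ζ) / ζ) * σ ^ 2 * (φ ⬝ᵥ (Λ⁻¹ *ᵥ φ) - lam * (φ ⬝ᵥ ((Λ⁻¹ * Λ⁻¹) *ᵥ φ))) := by
    have h1 : ∫ ω, (D ω) ^ 2 ∂μ = ∫ ω, ∑ i, ∑ j, T i ω * T j ω ∂μ := by
      refine integral_congr_ae (Filter.Eventually.of_forall fun ω => ?_)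
      show (D ω) ^ 2 = ∑ i, ∑ j, T i ω * T j ω
      rw [hD' ω, sq, Finset.sum_mul_sum]
    rw [h1, integral_finset_sum _ (fun i _ => integrable_finset_sum _ (fun j _ => hTint i j))]
    have h2 : ∀ i : Fin n, ∫ ω, ∑ j, T i ω * T j ω ∂μ = ∑ j, ∫ ω, T i ω * T j ω ∂μ :=
      fun i => integral_finset_sum _ (fun j _ => hTint i j)
    rw [Finset.sum_congr rfl fun i _ => h2 i]
    have h3 : ∀ i : Fin n, ∑ j, ∫ ω, T i ω * T j ω ∂μ
        = (a i)^2 * ((1 - ζ)/ζ * σ^2) := by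
      intro i
      rw [Finset.sum_eq_single i]
      · rw [hEprod i i, hEe2 i, hEf2 i]; ring
      · intro j _ hji
        rw [hEprod i j, hEe i j (Ne.symm hji), mul_zero, mul_zero]
      · intro h; exact absurd (Finset.mem_univ i) h
    rw [Finset.sum_congr rfl fun i _ => h3 i, ← Finset.sum_mul,
      BBhelper.key_alg φi φ lam hlam Λ hΛ]
    ring
  refine ⟨hvar, ?_⟩
  -- Step 8: the standard deviation
  have hQ : 0 ≤ φ ⬝ᵥ (Λ⁻¹ *ᵥ φ) - lam * (φ ⬝ᵥ ((Λ⁻¹ * Λ⁻¹) *ᵥ φ)) := by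
    rw [← BBhelper.key_alg φi φ lam hlam Λ hΛ]
    exact Finset.sum_nonneg fun i _ => sq_nonneg _
  have hz : (0:ℝ) ≤ (1 - ζ)/ζ := div_nonneg (by linarith) hζ0.le
  rw [hvar, Real.sqrt_mul (mul_nonneg hz (sq_nonneg σ)) _,
    Real.sqrt_mul hz (σ^2), Real.sqrt_sq hσ]
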